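/- Let (V, g) be a globally hyperbolic time-oriented Lorentzian manifold with a Cauchy time function T (a smooth function with past-directed timelike gradient whose level sets are Cauchy hypersurfaces), and let h : V → ℝ be a smooth function with past-directed timelike gradient that agrees with T outside a region bounded in the past by a Cauchy hypersurface Σ₋ and in the future by a Cauchy hypersurface Σ₊. Then every nonempty level set of h is a Cauchy hypersurface, i.e. h is itself a Cauchy time function. -/
import Mathlib


/-- A deformed time function is again a Cauchy time function: let `V` be a (globally
hyperbolic, time-oriented Lorentzian) manifold, encoded here by its family `𝒞` of
inextendible future-directed timelike curves `c : ℝ → V`.  A subset `S` is a Cauchy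
hypersurface iff every `c ∈ 𝒞` meets `S` exactly once.  Let `T` be a Cauchy time
function: `T` strictly increases along every `c ∈ 𝒞` (i.e. `grad T` is past-directed
timelike) and each of its level sets is a nonempty Cauchy hypersurface (encoded by
`T ∘ c` being surjective).  Let `h : V → ℝ` also strictly increase along every
`c ∈ 𝒞`, and suppose `h` agrees with `T` on the causal past of a Cauchy hypersurface
`Sm` and on the causal future of a Cauchy hypersurface `Sp`.  Then every level set of
`h` is met exactly once by every `c ∈ 𝒞`, i.e. `h` is a Cauchy time function. -/
theorem deformed_time_function_is_Cauchy
    {V : Type*} [TopologicalSpace V]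
    (𝒞 : Set (ℝ → V)) (T h : V → ℝ)
    (hTcont : Continuous T) (hhcont : Continuous h)
    (hccont : ∀ c ∈ 𝒞, Continuous c)
    (hTmono : ∀ c ∈ 𝒞, StrictMono fun s => T (c s))
    (hTsurj : ∀ c ∈ 𝒞, Function.Surjective fun s => T (c s))
    (hhmono : ∀ c ∈ 𝒞, StrictMono fun s => h (c s))
    (Sm Sp : Set V)
    (hSm : ∀ c ∈ 𝒞, ∃! s : ℝ, c s ∈ Sm)
    (hSp : ∀ c ∈ 𝒞, ∃! s : ℝ, c s ∈ Sp)
    (hpast : ∀ c ∈ 𝒞, ∀ s s' : ℝ, c s' ∈ Sm → s ≤ s' → h (c s) = T (c s))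
    (hfut : ∀ c ∈ 𝒞, ∀ s s' : ℝ, c s' ∈ Sp → s' ≤ s → h (c s) = T (c s)) :
    ∀ r : ℝ, ∀ c ∈ 𝒞, ∃! s : ℝ, h (c s) = r := by
  intro r c hc
  obtain ⟨sm, hsm, _⟩ := hSm c hc
  obtain ⟨sp, hsp, _⟩ := hSp c hc
  obtain ⟨s1, hs1⟩ := hTsurj c hc (min r (T (c sm)))
  obtain ⟨s2, hs2⟩ := hTsurj c hc (max r (T (c sp)))
  simp only at hs1 hs2
  have hs1le : s1 ≤ sm := (hTmono c hc).le_iff_le.mp (hs1 ▸ min_le_right _ _)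
  have hs2ge : sp ≤ s2 := (hTmono c hc).le_iff_le.mp (hs2 ▸ le_max_right _ _)
  have h1 : h (c s1) ≤ r := by
    rw [hpast c hc s1 sm hsm hs1le, hs1]; exact min_le_left _ _
  have h2 : r ≤ h (c s2) := by
    rw [hfut c hc s2 sp hsp hs2ge, hs2]; exact le_max_left _ _
  have h12 : s1 ≤ s2 := (hhmono c hc).le_iff_le.mp (h1.trans h2)
  have := intermediate_value_Icc h12 ((hhcont.comp (hccont c hc)).continuousOn)
  obtain ⟨s, _, hsr⟩ := this ⟨h1, h2⟩
  exact ⟨s, hsr, fun y hy => (hhmono c hc).injective (hy.trans hsr.symm)⟩
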